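/- For all 2 ≤ i ≠ j ≤ l and m1,n1,m2,n2 ∈ Z, [e_{1i}(m1,n1), e_{1j}(m2,n2)] = 0. -/

import Mathlib

open MvPolynomial

/-- Index set `{2, …, l}` for the variables. -/
abbrev Idx (l : ℕ) := {i : ℕ // 2 ≤ i ∧ i ≤ l}

/-- The polynomial ring `V = ℂ[x_i(m,n) : 2 ≤ i ≤ l, (m,n) ∈ ℤ²]`. -/
abbrev V (l : ℕ) := MvPolynomial (Idx l × ℤ × ℤ) ℂ

/-- `e_{ij}(m1,n1) = Σ_{(m,n)} q^{m n1} x_i(m1+m, n1+n) ∂/∂x_j(m,n)`, for `2 ≤ i,j ≤ l`. -/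
noncomputable def eGen (l : ℕ) (q : ℂ) (i j : Idx l) (m1 n1 : ℤ) (p : V l) : V l :=
  ∑ᶠ mn : ℤ × ℤ,
    q ^ (mn.1 * n1) • (X (i, m1 + mn.1, n1 + mn.2) * pderiv (j, mn.1, mn.2) p)

/-- `e_{i1}(m,n)` = multiplication by the variable `x_i(m,n)`. -/
noncomputable def eLow (l : ℕ) (i : Idx l) (m n : ℤ) (p : V l) : V l :=
  X (i, m, n) * p

/-- `e_{11}(m1,n1) = μ δ_{(m1,n1),(0,0)} − Σ_{j=2}^l Σ_{(m,n)} q^{n m1} x_j(m1+m, n1+n) ∂/∂x_j(m,n)`. -/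
noncomputable def e11 (l : ℕ) (q μ : ℂ) (m1 n1 : ℤ) (p : V l) : V l :=
  (if (m1, n1) = ((0 : ℤ), (0 : ℤ)) then μ else 0) • p
  - ∑ᶠ j : Idx l, ∑ᶠ mn : ℤ × ℤ,
      q ^ (mn.2 * m1) • (X (j, m1 + mn.1, n1 + mn.2) * pderiv (j, mn.1, mn.2) p)

/-- `e_{1i}(m1,n1) = q^{−m1 n1} μ ∂/∂x_i(−m1,−n1)
  − Σ_{j=2}^l Σ_{(m,n),(m',n')} q^{n1 m' + n m1 + n m'}
      x_j(m1+m+m', n1+n+n') ∂/∂x_j(m,n) ∂/∂x_i(m',n')`, for `2 ≤ i ≤ l`. -/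
noncomputable def eUp (l : ℕ) (q μ : ℂ) (i : Idx l) (m1 n1 : ℤ) (p : V l) : V l :=
  q ^ (-(m1 * n1)) • μ • pderiv (i, -m1, -n1) p
  - ∑ᶠ j : Idx l, ∑ᶠ mm : (ℤ × ℤ) × (ℤ × ℤ),
      q ^ (n1 * mm.2.1 + mm.1.2 * m1 + mm.1.2 * mm.2.1) •
        (X (j, m1 + mm.1.1 + mm.2.1, n1 + mm.1.2 + mm.2.2) *
          pderiv (j, mm.1.1, mm.1.2) (pderiv (i, mm.2.1, mm.2.2) p))

/-- Degree operator `D1 = Σ_{i=2}^l Σ_{(m,n)} m · x_i(m,n) ∂/∂x_i(m,n)`. -/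
noncomputable def D1 (l : ℕ) (p : V l) : V l :=
  ∑ᶠ i : Idx l, ∑ᶠ mn : ℤ × ℤ,
    (mn.1 : ℂ) • (X (i, mn.1, mn.2) * pderiv (i, mn.1, mn.2) p)

/-- Degree operator `D2 = Σ_{i=2}^l Σ_{(m,n)} n · x_i(m,n) ∂/∂x_i(m,n)`. -/
noncomputable def D2 (l : ℕ) (p : V l) : V l :=
  ∑ᶠ i : Idx l, ∑ᶠ mn : ℤ × ℤ,
    (mn.2 : ℂ) • (X (i, mn.1, mn.2) * pderiv (i, mn.1, mn.2) p)

/-- Commutator `[A,B] = A∘B − B∘A` of operators on `V`. -/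
noncomputable def oComm {l : ℕ} (A B : V l → V l) : V l → V l := fun p => A (B p) - B (A p)

namespace Stmt8Aux

section General
variable {σ : Type*}

theorem coeff_pderiv' (v : σ) (m : σ →₀ ℕ) (p : MvPolynomial σ ℂ) :
    coeff m (pderiv v p) = (m v + 1 : ℕ) • coeff (m + Finsupp.single v 1) p := by
  classical
  induction p using MvPolynomial.induction_on' with
  | monomial s a =>
    rw [pderiv_monomial, coeff_monomial, coeff_monomial]
    by_cases h : s = m + Finsupp.single v 1
    · subst h
      rw [if_pos (add_tsub_cancel_right _ _)]
      simp [mul_comm]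
    · rw [if_neg h]
      by_cases h2 : s - Finsupp.single v 1 = m
      · rw [if_pos h2]
        have hs : s v = 0 := by
          by_contra hs
          apply h
          rw [← h2, tsub_add_cancel_of_le]
          rwa [Finsupp.single_le_iff, Nat.one_le_iff_ne_zero]
        simp [hs]
      · rw [if_neg h2]; simp
  | add p q hp hq => simp [hp, hq, mul_add]

theorem mem_vars_pderiv {v : σ} {p : MvPolynomial σ ℂ} {x : σ}
    (h : x ∈ (pderiv v p).vars) : x ∈ p.vars := by
  classical
  rw [mem_vars] at h ⊢
  obtain ⟨m, hm, hx⟩ := h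
  refine ⟨m + Finsupp.single v 1, ?_, ?_⟩
  · rw [mem_support_iff] at hm ⊢
    intro h0
    rw [coeff_pderiv', h0] at hm
    simp at hm
  · rw [Finsupp.mem_support_iff] at hx ⊢
    simp only [Finsupp.add_apply]
    omega

theorem pderiv_comm' (u w : σ) (p : MvPolynomial σ ℂ) :
    pderiv u (pderiv w p) = pderiv w (pderiv u p) := by
  classical
  induction p using MvPolynomial.induction_on' with
  | monomial s a =>
    simp only [pderiv_monomial]
    by_cases h : u = w
    · subst h; rfl
    · have h1 : ((s - Finsupp.single w 1 : σ →₀ ℕ)) u = s u := by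
        simp [Finsupp.tsub_apply, Finsupp.single_apply, Ne.symm h]
      have h2 : ((s - Finsupp.single u 1 : σ →₀ ℕ)) w = s w := by
        simp [Finsupp.tsub_apply, Finsupp.single_apply, h]
      rw [h1, h2, tsub_right_comm]
      ring_nf
  | add p q hp hq => simp [hp, hq]

theorem pd_push2 (u v w : σ) (p : MvPolynomial σ ℂ) :
    pderiv u (pderiv v (pderiv w p)) = pderiv v (pderiv w (pderiv u p)) := by
  rw [pderiv_comm' u v, pderiv_comm' u w]

theorem pd_push3 (u v w x : σ) (p : MvPolynomial σ ℂ) :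
    pderiv u (pderiv v (pderiv w (pderiv x p))) =
      pderiv v (pderiv w (pderiv x (pderiv u p))) := by
  rw [pderiv_comm' u v, pderiv_comm' u w, pderiv_comm' u x]

theorem pd_swap22 (a b c d : σ) (p : MvPolynomial σ ℂ) :
    pderiv a (pderiv b (pderiv c (pderiv d p))) =
      pderiv c (pderiv d (pderiv a (pderiv b p))) := by
  rw [pd_push3 a b c d p, pd_push3 b c d a p]

theorem pderiv_X_mul' [DecidableEq σ] (u w : σ) (g : MvPolynomial σ ℂ) :
    pderiv u (X w * g) = (if u = w then g else 0) + X w * pderiv u g := by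
  rw [pderiv_mul]
  by_cases h : u = w
  · subst h; simp
  · rw [pderiv_X_of_ne (Ne.symm h), if_neg h]; simp

theorem pderiv2_X_mul' [DecidableEq σ] (u v w : σ) (g : MvPolynomial σ ℂ) :
    pderiv u (pderiv v (X w * g)) =
      (if v = w then pderiv u g else 0) +
        ((if u = w then pderiv v g else 0) + X w * pderiv u (pderiv v g)) := by
  rw [pderiv_X_mul', Derivation.map_add, pderiv_X_mul', apply_ite (pderiv u), map_zero]

end General

noncomputable instance {l : ℕ} : Fintype (Idx l) :=
  Fintype.ofInjective
    (fun x : Idx l => (⟨x.1, Finset.mem_Icc.mpr x.2⟩ : {a : ℕ // a ∈ Finset.Icc 2 l}))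
    (fun a b h => by
      apply Subtype.ext
      have := congrArg Subtype.val h
      simpa using this)

variable {l : ℕ}

/-- `ex m1 n1 mm` : the exponent appearing in `eUp`. -/
abbrev ex (m1 n1 : ℤ) (mm : (ℤ × ℤ) × (ℤ × ℤ)) : ℤ :=
  n1 * mm.2.1 + mm.1.2 * m1 + mm.1.2 * mm.2.1

/-- `sh m2 n2 nn` : the shifted index of the `X` variable appearing in `eUp`. -/
abbrev sh (m2 n2 : ℤ) (nn : (ℤ × ℤ) × (ℤ × ℤ)) : ℤ × ℤ :=
  (m2 + nn.1.1 + nn.2.1, n2 + nn.1.2 + nn.2.2)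

/-- `tau`: the collapsed index from the delta term in `P2`. -/
abbrev tau (m1 n1 m2 n2 : ℤ) (gh : ℤ × ℤ) : ℤ × ℤ := (-m1 - m2 - gh.1, -n1 - n2 - gh.2)

noncomputable def P1 (q μ : ℂ) (i j : Idx l) (m1 n1 m2 n2 : ℤ) (p : V l) : V l :=
  q ^ (-(m1 * n1)) • μ •
    (q ^ (-(m2 * n2)) • μ • pderiv (i, -m1, -n1) (pderiv (j, -m2, -n2) p))

noncomputable def T1 (q μ : ℂ) (i j : Idx l) (m1 n1 m2 n2 : ℤ) (p : V l) : V l :=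
  ∑ᶠ gh : ℤ × ℤ,
    q ^ (-(m1 * n1)) • μ •
      (q ^ ex m2 n2 (tau m1 n1 m2 n2 gh, gh) •
        pderiv (i, (tau m1 n1 m2 n2 gh).1, (tau m1 n1 m2 n2 gh).2)
          (pderiv (j, gh.1, gh.2) p))

noncomputable def T2 (q μ : ℂ) (i j : Idx l) (m1 n1 m2 n2 : ℤ) (p : V l) : V l :=
  ∑ᶠ z : Idx l × ((ℤ × ℤ) × (ℤ × ℤ)),
    q ^ (-(m1 * n1)) • μ •
      (q ^ ex m2 n2 z.2 •
        (X (z.1, m2 + z.2.1.1 + z.2.2.1, n2 + z.2.1.2 + z.2.2.2) *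
          pderiv (i, -m1, -n1)
            (pderiv (z.1, z.2.1.1, z.2.1.2) (pderiv (j, z.2.2.1, z.2.2.2) p))))

noncomputable def T3 (q μ : ℂ) (i j : Idx l) (m1 n1 m2 n2 : ℤ) (p : V l) : V l :=
  ∑ᶠ z : Idx l × ((ℤ × ℤ) × (ℤ × ℤ)),
    q ^ ex m1 n1 z.2 •
      (X (z.1, m1 + z.2.1.1 + z.2.2.1, n1 + z.2.1.2 + z.2.2.2) *
        (q ^ (-(m2 * n2)) • μ •
          pderiv (z.1, z.2.1.1, z.2.1.2)
            (pderiv (i, z.2.2.1, z.2.2.2) (pderiv (j, -m2, -n2) p))))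

noncomputable def U1 (q μ : ℂ) (i j : Idx l) (m1 n1 m2 n2 : ℤ) (p : V l) : V l :=
  ∑ᶠ z : Idx l × ((ℤ × ℤ) × ((ℤ × ℤ) × (ℤ × ℤ))),
    q ^ ex m1 n1 (z.2.1, sh m2 n2 z.2.2) •
      (X (z.1, m1 + z.2.1.1 + (sh m2 n2 z.2.2).1, n1 + z.2.1.2 + (sh m2 n2 z.2.2).2) *
        (q ^ ex m2 n2 z.2.2 •
          pderiv (z.1, z.2.1.1, z.2.1.2)
            (pderiv (i, z.2.2.1.1, z.2.2.1.2) (pderiv (j, z.2.2.2.1, z.2.2.2.2) p))))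

noncomputable def U2 (q μ : ℂ) (i j : Idx l) (m1 n1 m2 n2 : ℤ) (p : V l) : V l :=
  ∑ᶠ z : Idx l × ((ℤ × ℤ) × ((ℤ × ℤ) × (ℤ × ℤ))),
    q ^ ex m1 n1 (sh m2 n2 z.2.2, z.2.1) •
      (X (z.1, m1 + (sh m2 n2 z.2.2).1 + z.2.1.1, n1 + (sh m2 n2 z.2.2).2 + z.2.1.2) *
        (q ^ ex m2 n2 z.2.2 •
          pderiv (i, z.2.1.1, z.2.1.2)
            (pderiv (z.1, z.2.2.1.1, z.2.2.1.2) (pderiv (j, z.2.2.2.1, z.2.2.2.2) p))))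

noncomputable def QQ (q μ : ℂ) (i j : Idx l) (m1 n1 m2 n2 : ℤ) (p : V l) : V l :=
  ∑ᶠ z : (Idx l × Idx l) × (((ℤ × ℤ) × (ℤ × ℤ)) × ((ℤ × ℤ) × (ℤ × ℤ))),
    q ^ ex m1 n1 z.2.1 •
      (X (z.1.1, m1 + z.2.1.1.1 + z.2.1.2.1, n1 + z.2.1.1.2 + z.2.1.2.2) *
        (q ^ ex m2 n2 z.2.2 •
          (X (z.1.2, m2 + z.2.2.1.1 + z.2.2.2.1, n2 + z.2.2.1.2 + z.2.2.2.2) *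
            pderiv (z.1.1, z.2.1.1.1, z.2.1.1.2)
              (pderiv (i, z.2.1.2.1, z.2.1.2.2)
                (pderiv (z.1.2, z.2.2.1.1, z.2.2.1.2)
                  (pderiv (j, z.2.2.2.1, z.2.2.2.2) p))))))

noncomputable def E (q μ : ℂ) (i j : Idx l) (m1 n1 m2 n2 : ℤ) (p : V l) : V l :=
  P1 q μ i j m1 n1 m2 n2 p - T1 q μ i j m1 n1 m2 n2 p - T2 q μ i j m1 n1 m2 n2 p
    - T3 q μ i j m1 n1 m2 n2 p
    + (U1 q μ i j m1 n1 m2 n2 p + U2 q μ i j m1 n1 m2 n2 p + QQ q μ i j m1 n1 m2 n2 p)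

section Symm
variable (q μ : ℂ) (hq : q ≠ 0) (i j : Idx l) (m1 n1 m2 n2 : ℤ) (p : V l)

theorem P1_symm : P1 q μ i j m1 n1 m2 n2 p = P1 q μ j i m2 n2 m1 n1 p := by
  unfold P1
  simp only [smul_smul]
  rw [pderiv_comm']
  congr 1
  ring

theorem T1_symm (hq : q ≠ 0) : T1 q μ i j m1 n1 m2 n2 p = T1 q μ j i m2 n2 m1 n1 p := by
  unfold T1
  have hb : Function.Bijective (fun gh : ℤ × ℤ => ((-m1 - m2 - gh.1, -n1 - n2 - gh.2) : ℤ × ℤ)) := by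
    have : Function.Involutive (fun gh : ℤ × ℤ => ((-m1 - m2 - gh.1, -n1 - n2 - gh.2) : ℤ × ℤ)) := by
      intro gh
      obtain ⟨g1, g2⟩ := gh
      simp only [Prod.mk.injEq]
      constructor <;> ring
    exact this.bijective
  refine finsum_eq_of_bijective _ hb ?_
  intro gh
  simp only [tau]
  rw [show -m2 - m1 - (-m1 - m2 - gh.1) = gh.1 by ring,
      show -n2 - n1 - (-n1 - n2 - gh.2) = gh.2 by ring]
  rw [pderiv_comm']
  simp only [smul_smul]
  congr 1
  rw [mul_comm (q ^ (-(m1 * n1))) (μ * _), mul_comm (q ^ (-(m2 * n2))) (μ * _),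
    mul_assoc, mul_assoc, ← zpow_add₀ hq, ← zpow_add₀ hq]
  congr 2
  simp only [ex]
  ring

theorem T2_T3_symm : T2 q μ i j m1 n1 m2 n2 p = T3 q μ j i m2 n2 m1 n1 p := by
  unfold T2 T3
  refine finsum_congr fun z => ?_
  rw [pd_push2]
  simp only [mul_smul_comm, smul_smul]
  congr 1
  ring

theorem U1_U2_symm (hq : q ≠ 0) : U1 q μ i j m1 n1 m2 n2 p = U2 q μ j i m2 n2 m1 n1 p := by
  unfold U1 U2
  have hb : Function.Bijective
      (fun z : Idx l × ((ℤ × ℤ) × ((ℤ × ℤ) × (ℤ × ℤ))) =>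
        ((z.1, (z.2.2.2, (z.2.1, z.2.2.1))) : Idx l × ((ℤ × ℤ) × ((ℤ × ℤ) × (ℤ × ℤ))))) := by
    apply Function.bijective_iff_has_inverse.mpr
    refine ⟨fun z => (z.1, (z.2.2.1, (z.2.2.2, z.2.1))), fun z => rfl, fun z => rfl⟩
  refine finsum_eq_of_bijective _ hb ?_
  intro z
  obtain ⟨k, ab, ef, gh⟩ := z
  simp only [sh, ex]
  rw [show m2 + (m1 + ab.1 + ef.1) + gh.1 = m1 + ab.1 + (m2 + ef.1 + gh.1) by ring,
      show n2 + (n1 + ab.2 + ef.2) + gh.2 = n1 + ab.2 + (n2 + ef.2 + gh.2) by ring]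
  rw [show pderiv ((j : Idx l), gh.1, gh.2) (pderiv (k, ab.1, ab.2) (pderiv (i, ef.1, ef.2) p))
      = pderiv (k, ab.1, ab.2) (pderiv (i, ef.1, ef.2) (pderiv (j, gh.1, gh.2) p)) from
    (pd_push2 _ _ _ p)]
  simp only [mul_smul_comm, smul_smul]
  congr 1
  rw [← zpow_add₀ hq, ← zpow_add₀ hq]
  congr 1
  ring

theorem QQ_symm : QQ q μ i j m1 n1 m2 n2 p = QQ q μ j i m2 n2 m1 n1 p := by
  unfold QQ
  have hb : Function.Bijective
      (fun z : (Idx l × Idx l) × (((ℤ × ℤ) × (ℤ × ℤ)) × ((ℤ × ℤ) × (ℤ × ℤ))) =>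
        (((z.1.2, z.1.1), (z.2.2, z.2.1)) :
          (Idx l × Idx l) × (((ℤ × ℤ) × (ℤ × ℤ)) × ((ℤ × ℤ) × (ℤ × ℤ))))) := by
    have : Function.Involutive
        (fun z : (Idx l × Idx l) × (((ℤ × ℤ) × (ℤ × ℤ)) × ((ℤ × ℤ) × (ℤ × ℤ))) =>
          (((z.1.2, z.1.1), (z.2.2, z.2.1)) :
            (Idx l × Idx l) × (((ℤ × ℤ) × (ℤ × ℤ)) × ((ℤ × ℤ) × (ℤ × ℤ))))) := fun z => rfl
    exact this.bijective
  refine finsum_eq_of_bijective _ hb ?_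
  intro z
  obtain ⟨⟨k, h⟩, mm, nn⟩ := z
  rw [pd_swap22]
  simp only [mul_smul_comm, smul_smul]
  rw [mul_left_comm (X _) (X _)]
  congr 1
  ring

theorem E_symm (hq : q ≠ 0) : E q μ i j m1 n1 m2 n2 p = E q μ j i m2 n2 m1 n1 p := by
  unfold E
  rw [P1_symm q μ i j, T1_symm q μ i j m1 n1 m2 n2 p hq, T2_T3_symm q μ i j,
    show T3 q μ i j m1 n1 m2 n2 p = T2 q μ j i m2 n2 m1 n1 p from
      (T2_T3_symm q μ j i m2 n2 m1 n1 p).symm,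
    U1_U2_symm q μ i j m1 n1 m2 n2 p hq,
    show U2 q μ i j m1 n1 m2 n2 p = U1 q μ j i m2 n2 m1 n1 p from
      (U1_U2_symm q μ j i m2 n2 m1 n1 p hq).symm,
    QQ_symm q μ i j]
  abel

end Symm

section Convert
open Finset
variable {l : ℕ}

theorem pderiv_ite {σ : Type*} (u : σ) (c : Prop) [Decidable c] (g : MvPolynomial σ ℂ) :
    pderiv u (if c then g else 0) = if c then pderiv u g else 0 := by
  split_ifs <;> simp

/-- nonvanishing chain: if `c • (X w * D)` is nonzero then `D` is nonzero. -/
theorem ne_zero_of_smul_mul {c : ℂ} {w : Idx l × ℤ × ℤ} {D : V l}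
    (h : c • (X w * D) ≠ 0) : D ≠ 0 := by
  intro h0; apply h; rw [h0, mul_zero, smul_zero]

theorem mem_snd_of_pd_ne_zero {p : V l} {v : Idx l × ℤ × ℤ} (h : pderiv v p ≠ 0)
    {W : Finset (ℤ × ℤ)} (hW : ∀ x ∈ p.vars, Prod.snd x ∈ W) : v.2 ∈ W := by
  apply hW
  by_contra hv
  exact h (pderiv_eq_zero_of_notMem_vars hv)

theorem SS_eq_sum (q : ℂ) (i' : Idx l) (m n : ℤ) (p' : V l) (W : Finset (ℤ × ℤ))
    (hW : ∀ v ∈ p'.vars, Prod.snd v ∈ W) :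
    (∑ᶠ k : Idx l, ∑ᶠ mm : (ℤ × ℤ) × (ℤ × ℤ),
        q ^ (n * mm.2.1 + mm.1.2 * m + mm.1.2 * mm.2.1) •
          (X (k, m + mm.1.1 + mm.2.1, n + mm.1.2 + mm.2.2) *
            pderiv (k, mm.1.1, mm.1.2) (pderiv (i', mm.2.1, mm.2.2) p'))) =
    ∑ k : Idx l, ∑ mm ∈ W ×ˢ W,
        q ^ (n * mm.2.1 + mm.1.2 * m + mm.1.2 * mm.2.1) •
          (X (k, m + mm.1.1 + mm.2.1, n + mm.1.2 + mm.2.2) *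
            pderiv (k, mm.1.1, mm.1.2) (pderiv (i', mm.2.1, mm.2.2) p')) := by
  rw [finsum_eq_sum_of_fintype]
  refine Finset.sum_congr rfl fun k _ => ?_
  apply finsum_eq_sum_of_support_subset
  intro mm hmm
  simp only [Function.mem_support] at hmm
  have h2 : pderiv ((i', mm.2.1, mm.2.2) : Idx l × ℤ × ℤ) p' ≠ 0 := by
    intro h0; apply hmm; rw [h0, map_zero, mul_zero, smul_zero]
  have h1 : pderiv ((k, mm.1.1, mm.1.2) : Idx l × ℤ × ℤ)
      (pderiv (i', mm.2.1, mm.2.2) p') ≠ 0 := ne_zero_of_smul_mul hmm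
  have hm2 : mm.2 ∈ W := by
    have := mem_snd_of_pd_ne_zero h2 hW
    simpa using this
  have hm1 : mm.1 ∈ W := by
    have : ((k, mm.1.1, mm.1.2) : Idx l × ℤ × ℤ).2 ∈ W := by
      apply mem_snd_of_pd_ne_zero h1
      intro x hx
      exact hW x (mem_vars_pderiv hx)
    simpa using this
  simp only [Finset.coe_product, Set.mem_prod]
  exact ⟨hm1, hm2⟩

/-- Collapse a sum of point-mass over an equality with a fintype index. -/
theorem pair_collapse {α β γ M : Type*} [Fintype α] [DecidableEq α] [DecidableEq β]
    [AddCommMonoid M] (a : α) (c : β) (t : Finset γ) (τf : γ → β) (f : α → γ → M) :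
    (∑ h : α, ∑ nn ∈ t, if (a, c) = (h, τf nn) then f h nn else 0) =
      ∑ nn ∈ t, if c = τf nn then f a nn else 0 := by
  rw [Finset.sum_comm]
  refine Finset.sum_congr rfl fun nn _ => ?_
  simp only [Prod.mk.injEq, ite_and]
  rw [Finset.sum_ite_eq]
  simp

theorem prod_collapse {β M : Type*} [DecidableEq β] [AddCommMonoid M]
    (s t : Finset β) (τ : β → β) (g : β → β → M)
    (h : ∀ x ∈ t, g (τ x) x ≠ 0 → τ x ∈ s) :
    (∑ nn ∈ s ×ˢ t, if nn.1 = τ nn.2 then g nn.1 nn.2 else 0) = ∑ x ∈ t, g (τ x) x := by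
  rw [Finset.sum_product, Finset.sum_comm]
  refine Finset.sum_congr rfl fun x hx => ?_
  simp only
  rw [Finset.sum_ite_eq']
  by_cases hmem : τ x ∈ s
  · rw [if_pos hmem]
  · rw [if_neg hmem]
    by_contra h0
    exact hmem (h x hx fun h1 => h0 h1.symm)

theorem quad_collapse {α β γ M : Type*} [Fintype α] [DecidableEq α] [DecidableEq β]
    [AddCommMonoid M] (a : α) (s : Finset β) (t : Finset γ) (τf : γ → β)
    (f : β → α → γ → M) (hf : ∀ nn ∈ t, f (τf nn) a nn ≠ 0 → τf nn ∈ s) :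
    (∑ cd ∈ s, ∑ h : α, ∑ nn ∈ t, if (a, cd) = (h, τf nn) then f cd h nn else 0) =
      ∑ nn ∈ t, f (τf nn) a nn := by
  have step1 : ∀ cd ∈ s, (∑ h : α, ∑ nn ∈ t, if (a, cd) = (h, τf nn) then f cd h nn else 0)
      = ∑ nn ∈ t, if cd = τf nn then f cd a nn else 0 := fun cd _ =>
    pair_collapse a cd t τf (fun h nn => f cd h nn)
  rw [Finset.sum_congr rfl step1, Finset.sum_comm]
  refine Finset.sum_congr rfl fun nn hnn => ?_
  rw [Finset.sum_ite_eq']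
  by_cases hmem : τf nn ∈ s
  · rw [if_pos hmem]
  · rw [if_neg hmem]
    by_contra h0
    exact hmem (hf nn hnn fun h1 => h0 h1.symm)

theorem vars_bound (q μ : ℂ) (j : Idx l) (m2 n2 : ℤ) (p : V l) :
    ∀ v ∈ (eUp l q μ j m2 n2 p).vars, Prod.snd v ∈
      (p.vars.image Prod.snd ∪
        ((p.vars.image Prod.snd) ×ˢ (p.vars.image Prod.snd)).image
          (fun nn : (ℤ × ℤ) × (ℤ × ℤ) => ((m2 + nn.1.1 + nn.2.1, n2 + nn.1.2 + nn.2.2) : ℤ × ℤ))) := by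
  classical
  intro v hv
  set T := p.vars.image Prod.snd with hT
  have hTmem : ∀ x ∈ p.vars, Prod.snd x ∈ T := fun x hx => Finset.mem_image_of_mem _ hx
  rw [eUp, SS_eq_sum q j m2 n2 p T hTmem] at hv
  have hv2 := MvPolynomial.vars_sub_subset _ hv
  rw [Finset.mem_union] at hv2
  rcases hv2 with hv2 | hv2
  · -- the μ-part
    apply Finset.mem_union_left
    apply hTmem
    rw [smul_eq_C_mul] at hv2
    have := MvPolynomial.vars_mul _ _ hv2
    rw [Finset.mem_union, MvPolynomial.vars_C] at this
    rcases this with h | h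
    · exact absurd h (Finset.notMem_empty v)
    · rw [smul_eq_C_mul] at h
      have := MvPolynomial.vars_mul _ _ h
      rw [Finset.mem_union, MvPolynomial.vars_C] at this
      rcases this with h' | h'
      · exact absurd h' (Finset.notMem_empty v)
      · exact mem_vars_pderiv h'
  · -- the sum part
    have := MvPolynomial.vars_sum_subset _ _ hv2
    rw [Finset.mem_biUnion] at this
    obtain ⟨k, _, hk⟩ := this
    have := MvPolynomial.vars_sum_subset _ _ hk
    rw [Finset.mem_biUnion] at this
    obtain ⟨mm, hmm, hvmm⟩ := this
    rw [smul_eq_C_mul] at hvmm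
    have := MvPolynomial.vars_mul _ _ hvmm
    rw [Finset.mem_union, MvPolynomial.vars_C] at this
    rcases this with h | h
    · exact absurd h (Finset.notMem_empty v)
    · have := MvPolynomial.vars_mul _ _ h
      rw [Finset.mem_union] at this
      rcases this with h' | h'
      · rw [MvPolynomial.vars_X, Finset.mem_singleton] at h'
        subst h'
        apply Finset.mem_union_right
        rw [Finset.mem_product] at hmm
        exact Finset.mem_image_of_mem _ (Finset.mem_product.mpr hmm)
      · apply Finset.mem_union_left
        apply hTmem
        exact mem_vars_pderiv (mem_vars_pderiv h')

end Convert

section Conv2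
open Finset
variable {l : ℕ} (q μ : ℂ) (i j : Idx l) (m1 n1 m2 n2 : ℤ) (p : V l)

theorem T1_conv :
    T1 q μ i j m1 n1 m2 n2 p =
      ∑ gh ∈ p.vars.image Prod.snd,
        q ^ (-(m1 * n1)) • μ •
          (q ^ (n2 * gh.1 + (-n1 - n2 - gh.2) * m2 + (-n1 - n2 - gh.2) * gh.1) •
            pderiv (i, -m1 - m2 - gh.1, -n1 - n2 - gh.2) (pderiv (j, gh.1, gh.2) p)) := by
  unfold T1
  apply finsum_eq_sum_of_support_subset
  intro gh hgh
  simp only [Function.mem_support] at hgh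
  have h2 : pderiv ((j, gh.1, gh.2) : Idx l × ℤ × ℤ) p ≠ 0 := by
    intro h0; apply hgh; rw [h0, map_zero, smul_zero, smul_zero, smul_zero]
  have := mem_snd_of_pd_ne_zero h2 (fun x hx => Finset.mem_image_of_mem _ hx)
  simpa using this

theorem T2_conv :
    T2 q μ i j m1 n1 m2 n2 p =
      ∑ h : Idx l, ∑ nn ∈ (p.vars.image Prod.snd) ×ˢ (p.vars.image Prod.snd),
        q ^ (-(m1 * n1)) • μ •
          (q ^ (n2 * nn.2.1 + nn.1.2 * m2 + nn.1.2 * nn.2.1) •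
            (X (h, m2 + nn.1.1 + nn.2.1, n2 + nn.1.2 + nn.2.2) *
              pderiv (i, -m1, -n1) (pderiv (h, nn.1.1, nn.1.2) (pderiv (j, nn.2.1, nn.2.2) p)))) := by
  unfold T2
  rw [← Finset.sum_product']
  apply finsum_eq_sum_of_support_subset
  rintro ⟨h, nn⟩ hz
  simp only [Function.mem_support] at hz
  have h2 : pderiv ((j, nn.2.1, nn.2.2) : Idx l × ℤ × ℤ) p ≠ 0 := by
    intro h0; apply hz; simp [h0]
  have h1 : pderiv ((h, nn.1.1, nn.1.2) : Idx l × ℤ × ℤ)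
      (pderiv (j, nn.2.1, nn.2.2) p) ≠ 0 := by
    intro h0; apply hz; simp [h0]
  have hm2 : nn.2 ∈ p.vars.image Prod.snd := by
    have := mem_snd_of_pd_ne_zero h2 (fun x hx => Finset.mem_image_of_mem _ hx)
    simpa using this
  have hm1 : nn.1 ∈ p.vars.image Prod.snd := by
    have := mem_snd_of_pd_ne_zero h1
      (fun x hx => Finset.mem_image_of_mem _ (mem_vars_pderiv hx))
    simpa using this
  simp only [Finset.coe_product, Set.mem_prod]
  exact ⟨Finset.mem_coe.mpr (Finset.mem_univ _), ⟨hm1, hm2⟩⟩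

variable (W : Finset (ℤ × ℤ))

theorem T3_conv (hTW : p.vars.image Prod.snd ⊆ W) :
    T3 q μ i j m1 n1 m2 n2 p =
      ∑ k : Idx l, ∑ mm ∈ W ×ˢ W,
        q ^ (n1 * mm.2.1 + mm.1.2 * m1 + mm.1.2 * mm.2.1) •
          (X (k, m1 + mm.1.1 + mm.2.1, n1 + mm.1.2 + mm.2.2) *
            (q ^ (-(m2 * n2)) • μ •
              pderiv (k, mm.1.1, mm.1.2)
                (pderiv (i, mm.2.1, mm.2.2) (pderiv ((j, -m2, -n2) : Idx l × ℤ × ℤ) p)))) := by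
  unfold T3
  rw [← Finset.sum_product']
  apply finsum_eq_sum_of_support_subset
  rintro ⟨k, mm⟩ hz
  simp only [Function.mem_support] at hz
  have h2 : pderiv ((i, mm.2.1, mm.2.2) : Idx l × ℤ × ℤ)
      (pderiv ((j, -m2, -n2) : Idx l × ℤ × ℤ) p) ≠ 0 := by
    intro h0; apply hz; simp [h0]
  have h1 : pderiv ((k, mm.1.1, mm.1.2) : Idx l × ℤ × ℤ)
      (pderiv (i, mm.2.1, mm.2.2) (pderiv ((j, -m2, -n2) : Idx l × ℤ × ℤ) p)) ≠ 0 := by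
    intro h0; apply hz; simp [h0]
  have hm2 : mm.2 ∈ W := by
    apply hTW
    have := mem_snd_of_pd_ne_zero h2
      (fun x hx => Finset.mem_image_of_mem _ (mem_vars_pderiv hx))
    simpa using this
  have hm1 : mm.1 ∈ W := by
    apply hTW
    have := mem_snd_of_pd_ne_zero h1
      (fun x hx => Finset.mem_image_of_mem _ (mem_vars_pderiv (mem_vars_pderiv hx)))
    simpa using this
  simp only [Finset.coe_product, Set.mem_prod]
  exact ⟨Finset.mem_coe.mpr (Finset.mem_univ _), ⟨hm1, hm2⟩⟩

theorem U1_conv (hTW : p.vars.image Prod.snd ⊆ W) :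
    U1 q μ i j m1 n1 m2 n2 p =
      ∑ k : Idx l, ∑ ab ∈ W, ∑ nn ∈ (p.vars.image Prod.snd) ×ˢ (p.vars.image Prod.snd),
        q ^ (n1 * (m2 + nn.1.1 + nn.2.1) + ab.2 * m1 + ab.2 * (m2 + nn.1.1 + nn.2.1)) •
          (X (k, m1 + ab.1 + (m2 + nn.1.1 + nn.2.1), n1 + ab.2 + (n2 + nn.1.2 + nn.2.2)) *
            (q ^ (n2 * nn.2.1 + nn.1.2 * m2 + nn.1.2 * nn.2.1) •
              pderiv (k, ab.1, ab.2)
                (pderiv (i, nn.1.1, nn.1.2) (pderiv (j, nn.2.1, nn.2.2) p)))) := by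
  unfold U1
  have tmp : (∑ z ∈ (Finset.univ : Finset (Idx l)) ×ˢ
        (W ×ˢ ((p.vars.image Prod.snd) ×ˢ (p.vars.image Prod.snd))),
        q ^ ex m1 n1 (z.2.1, sh m2 n2 z.2.2) •
          (X (z.1, m1 + z.2.1.1 + (sh m2 n2 z.2.2).1, n1 + z.2.1.2 + (sh m2 n2 z.2.2).2) *
            q ^ ex m2 n2 z.2.2 •
              pderiv (z.1, z.2.1.1, z.2.1.2)
                (pderiv (i, z.2.2.1.1, z.2.2.1.2) (pderiv (j, z.2.2.2.1, z.2.2.2.2) p)))) =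
      ∑ k : Idx l, ∑ ab ∈ W, ∑ nn ∈ (p.vars.image Prod.snd) ×ˢ (p.vars.image Prod.snd),
        q ^ (n1 * (m2 + nn.1.1 + nn.2.1) + ab.2 * m1 + ab.2 * (m2 + nn.1.1 + nn.2.1)) •
          (X (k, m1 + ab.1 + (m2 + nn.1.1 + nn.2.1), n1 + ab.2 + (n2 + nn.1.2 + nn.2.2)) *
            (q ^ (n2 * nn.2.1 + nn.1.2 * m2 + nn.1.2 * nn.2.1) •
              pderiv (k, ab.1, ab.2)
                (pderiv (i, nn.1.1, nn.1.2) (pderiv (j, nn.2.1, nn.2.2) p)))) := by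
    simp only [Finset.sum_product]
  rw [← tmp]
  apply finsum_eq_sum_of_support_subset
  rintro ⟨k, ab, nn⟩ hz
  simp only [Function.mem_support] at hz
  have h3 : pderiv ((j, nn.2.1, nn.2.2) : Idx l × ℤ × ℤ) p ≠ 0 := by
    intro h0; apply hz; simp [h0]
  have h2 : pderiv ((i, nn.1.1, nn.1.2) : Idx l × ℤ × ℤ)
      (pderiv (j, nn.2.1, nn.2.2) p) ≠ 0 := by
    intro h0; apply hz; simp [h0]
  have h1 : pderiv ((k, ab.1, ab.2) : Idx l × ℤ × ℤ)
      (pderiv (i, nn.1.1, nn.1.2) (pderiv (j, nn.2.1, nn.2.2) p)) ≠ 0 := by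
    intro h0; apply hz; simp [h0]
  have hm3 : nn.2 ∈ p.vars.image Prod.snd := by
    have := mem_snd_of_pd_ne_zero h3 (fun x hx => Finset.mem_image_of_mem _ hx)
    simpa using this
  have hm2 : nn.1 ∈ p.vars.image Prod.snd := by
    have := mem_snd_of_pd_ne_zero h2
      (fun x hx => Finset.mem_image_of_mem _ (mem_vars_pderiv hx))
    simpa using this
  have hm1 : ab ∈ W := by
    apply hTW
    have := mem_snd_of_pd_ne_zero h1
      (fun x hx => Finset.mem_image_of_mem _ (mem_vars_pderiv (mem_vars_pderiv hx)))
    simpa using this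
  simp only [Finset.coe_product, Set.mem_prod]
  exact ⟨Finset.mem_coe.mpr (Finset.mem_univ _), hm1, hm2, hm3⟩

theorem U2_conv (hTW : p.vars.image Prod.snd ⊆ W) :
    U2 q μ i j m1 n1 m2 n2 p =
      ∑ k : Idx l, ∑ cd ∈ W, ∑ nn ∈ (p.vars.image Prod.snd) ×ˢ (p.vars.image Prod.snd),
        q ^ (n1 * cd.1 + (n2 + nn.1.2 + nn.2.2) * m1 + (n2 + nn.1.2 + nn.2.2) * cd.1) •
          (X (k, m1 + (m2 + nn.1.1 + nn.2.1) + cd.1, n1 + (n2 + nn.1.2 + nn.2.2) + cd.2) *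
            (q ^ (n2 * nn.2.1 + nn.1.2 * m2 + nn.1.2 * nn.2.1) •
              pderiv (i, cd.1, cd.2)
                (pderiv (k, nn.1.1, nn.1.2) (pderiv (j, nn.2.1, nn.2.2) p)))) := by
  unfold U2
  have tmp : (∑ z ∈ (Finset.univ : Finset (Idx l)) ×ˢ
        (W ×ˢ ((p.vars.image Prod.snd) ×ˢ (p.vars.image Prod.snd))),
        q ^ ex m1 n1 (sh m2 n2 z.2.2, z.2.1) •
          (X (z.1, m1 + (sh m2 n2 z.2.2).1 + z.2.1.1, n1 + (sh m2 n2 z.2.2).2 + z.2.1.2) *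
            q ^ ex m2 n2 z.2.2 •
              pderiv (i, z.2.1.1, z.2.1.2)
                (pderiv (z.1, z.2.2.1.1, z.2.2.1.2) (pderiv (j, z.2.2.2.1, z.2.2.2.2) p)))) =
      ∑ k : Idx l, ∑ cd ∈ W, ∑ nn ∈ (p.vars.image Prod.snd) ×ˢ (p.vars.image Prod.snd),
        q ^ (n1 * cd.1 + (n2 + nn.1.2 + nn.2.2) * m1 + (n2 + nn.1.2 + nn.2.2) * cd.1) •
          (X (k, m1 + (m2 + nn.1.1 + nn.2.1) + cd.1, n1 + (n2 + nn.1.2 + nn.2.2) + cd.2) *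
            (q ^ (n2 * nn.2.1 + nn.1.2 * m2 + nn.1.2 * nn.2.1) •
              pderiv (i, cd.1, cd.2)
                (pderiv (k, nn.1.1, nn.1.2) (pderiv (j, nn.2.1, nn.2.2) p)))) := by
    simp only [Finset.sum_product]
  rw [← tmp]
  apply finsum_eq_sum_of_support_subset
  rintro ⟨k, cd, nn⟩ hz
  simp only [Function.mem_support] at hz
  have h3 : pderiv ((j, nn.2.1, nn.2.2) : Idx l × ℤ × ℤ) p ≠ 0 := by
    intro h0; apply hz; simp [h0]
  have h2 : pderiv ((k, nn.1.1, nn.1.2) : Idx l × ℤ × ℤ)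
      (pderiv (j, nn.2.1, nn.2.2) p) ≠ 0 := by
    intro h0; apply hz; simp [h0]
  have h1 : pderiv ((i, cd.1, cd.2) : Idx l × ℤ × ℤ)
      (pderiv (k, nn.1.1, nn.1.2) (pderiv (j, nn.2.1, nn.2.2) p)) ≠ 0 := by
    intro h0; apply hz; simp [h0]
  have hm3 : nn.2 ∈ p.vars.image Prod.snd := by
    have := mem_snd_of_pd_ne_zero h3 (fun x hx => Finset.mem_image_of_mem _ hx)
    simpa using this
  have hm2 : nn.1 ∈ p.vars.image Prod.snd := by
    have := mem_snd_of_pd_ne_zero h2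
      (fun x hx => Finset.mem_image_of_mem _ (mem_vars_pderiv hx))
    simpa using this
  have hm1 : cd ∈ W := by
    apply hTW
    have := mem_snd_of_pd_ne_zero h1
      (fun x hx => Finset.mem_image_of_mem _ (mem_vars_pderiv (mem_vars_pderiv hx)))
    simpa using this
  simp only [Finset.coe_product, Set.mem_prod]
  exact ⟨Finset.mem_coe.mpr (Finset.mem_univ _), hm1, hm2, hm3⟩

theorem QQ_conv (hTW : p.vars.image Prod.snd ⊆ W) :
    QQ q μ i j m1 n1 m2 n2 p =
      ∑ k : Idx l, ∑ mm ∈ W ×ˢ W, ∑ h : Idx l,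
        ∑ nn ∈ (p.vars.image Prod.snd) ×ˢ (p.vars.image Prod.snd),
        q ^ (n1 * mm.2.1 + mm.1.2 * m1 + mm.1.2 * mm.2.1) •
          (X (k, m1 + mm.1.1 + mm.2.1, n1 + mm.1.2 + mm.2.2) *
            (q ^ (n2 * nn.2.1 + nn.1.2 * m2 + nn.1.2 * nn.2.1) •
              (X (h, m2 + nn.1.1 + nn.2.1, n2 + nn.1.2 + nn.2.2) *
                pderiv (k, mm.1.1, mm.1.2)
                  (pderiv (i, mm.2.1, mm.2.2)
                    (pderiv (h, nn.1.1, nn.1.2) (pderiv (j, nn.2.1, nn.2.2) p)))))) := by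
  unfold QQ
  have tmp : (∑ z ∈ ((Finset.univ : Finset (Idx l)) ×ˢ (Finset.univ : Finset (Idx l))) ×ˢ
        ((W ×ˢ W) ×ˢ ((p.vars.image Prod.snd) ×ˢ (p.vars.image Prod.snd))),
        q ^ ex m1 n1 z.2.1 •
          (X (z.1.1, m1 + z.2.1.1.1 + z.2.1.2.1, n1 + z.2.1.1.2 + z.2.1.2.2) *
            q ^ ex m2 n2 z.2.2 •
              (X (z.1.2, m2 + z.2.2.1.1 + z.2.2.2.1, n2 + z.2.2.1.2 + z.2.2.2.2) *
                pderiv (z.1.1, z.2.1.1.1, z.2.1.1.2)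
                  (pderiv (i, z.2.1.2.1, z.2.1.2.2)
                    (pderiv (z.1.2, z.2.2.1.1, z.2.2.1.2)
                      (pderiv (j, z.2.2.2.1, z.2.2.2.2) p)))))) =
      ∑ k : Idx l, ∑ mm ∈ W ×ˢ W, ∑ h : Idx l,
        ∑ nn ∈ (p.vars.image Prod.snd) ×ˢ (p.vars.image Prod.snd),
        q ^ (n1 * mm.2.1 + mm.1.2 * m1 + mm.1.2 * mm.2.1) •
          (X (k, m1 + mm.1.1 + mm.2.1, n1 + mm.1.2 + mm.2.2) *
            (q ^ (n2 * nn.2.1 + nn.1.2 * m2 + nn.1.2 * nn.2.1) •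
              (X (h, m2 + nn.1.1 + nn.2.1, n2 + nn.1.2 + nn.2.2) *
                pderiv (k, mm.1.1, mm.1.2)
                  (pderiv (i, mm.2.1, mm.2.2)
                    (pderiv (h, nn.1.1, nn.1.2) (pderiv (j, nn.2.1, nn.2.2) p)))))) := by
    simp only [Finset.sum_product]
    refine Finset.sum_congr rfl fun k _ => ?_
    rw [Finset.sum_comm]
    refine Finset.sum_congr rfl fun y _ => ?_
    rw [Finset.sum_comm]
  rw [← tmp]
  apply finsum_eq_sum_of_support_subset
  rintro ⟨⟨k, h⟩, mm, nn⟩ hz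
  simp only [Function.mem_support] at hz
  have h4 : pderiv ((j, nn.2.1, nn.2.2) : Idx l × ℤ × ℤ) p ≠ 0 := by
    intro h0; apply hz; simp [h0]
  have h3 : pderiv ((h, nn.1.1, nn.1.2) : Idx l × ℤ × ℤ)
      (pderiv (j, nn.2.1, nn.2.2) p) ≠ 0 := by
    intro h0; apply hz; simp [h0]
  have h2 : pderiv ((i, mm.2.1, mm.2.2) : Idx l × ℤ × ℤ)
      (pderiv (h, nn.1.1, nn.1.2) (pderiv (j, nn.2.1, nn.2.2) p)) ≠ 0 := by
    intro h0; apply hz; simp [h0]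
  have h1 : pderiv ((k, mm.1.1, mm.1.2) : Idx l × ℤ × ℤ)
      (pderiv (i, mm.2.1, mm.2.2)
        (pderiv (h, nn.1.1, nn.1.2) (pderiv (j, nn.2.1, nn.2.2) p))) ≠ 0 := by
    intro h0; apply hz; simp [h0]
  have hm4 : nn.2 ∈ p.vars.image Prod.snd := by
    have := mem_snd_of_pd_ne_zero h4 (fun x hx => Finset.mem_image_of_mem _ hx)
    simpa using this
  have hm3 : nn.1 ∈ p.vars.image Prod.snd := by
    have := mem_snd_of_pd_ne_zero h3
      (fun x hx => Finset.mem_image_of_mem _ (mem_vars_pderiv hx))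
    simpa using this
  have hm2 : mm.2 ∈ W := by
    apply hTW
    have := mem_snd_of_pd_ne_zero h2
      (fun x hx => Finset.mem_image_of_mem _ (mem_vars_pderiv (mem_vars_pderiv hx)))
    simpa using this
  have hm1 : mm.1 ∈ W := by
    apply hTW
    have := mem_snd_of_pd_ne_zero h1
      (fun x hx => Finset.mem_image_of_mem _
        (mem_vars_pderiv (mem_vars_pderiv (mem_vars_pderiv hx))))
    simpa using this
  simp only [Finset.coe_product, Set.mem_prod]
  exact ⟨⟨Finset.mem_coe.mpr (Finset.mem_univ _), Finset.mem_coe.mpr (Finset.mem_univ _)⟩,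
    ⟨hm1, hm2⟩, hm3, hm4⟩

end Conv2

section Expand
open Finset
variable {l : ℕ}

theorem eUp_expand (q μ : ℂ) (i' : Idx l) (m n : ℤ) (p' : V l) (W : Finset (ℤ × ℤ))
    (hW : ∀ v ∈ p'.vars, Prod.snd v ∈ W) :
    eUp l q μ i' m n p' =
      q ^ (-(m * n)) • μ • pderiv (i', -m, -n) p' -
        ∑ k : Idx l, ∑ mm ∈ W ×ˢ W,
          q ^ (n * mm.2.1 + mm.1.2 * m + mm.1.2 * mm.2.1) •
            (X (k, m + mm.1.1 + mm.2.1, n + mm.1.2 + mm.2.2) *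
              pderiv (k, mm.1.1, mm.1.2) (pderiv (i', mm.2.1, mm.2.2) p')) := by
  unfold eUp
  rw [SS_eq_sum q i' m n p' W hW]

theorem expand (q μ : ℂ) (i j : Idx l) (m1 n1 m2 n2 : ℤ) (p : V l) :
    eUp l q μ i m1 n1 (eUp l q μ j m2 n2 p) = E q μ i j m1 n1 m2 n2 p := by
  classical
  have hTmem : ∀ x ∈ p.vars, Prod.snd x ∈ p.vars.image Prod.snd := fun x hx => Finset.mem_image_of_mem _ hx
  have hTA : p.vars.image Prod.snd ⊆ (p.vars.image Prod.snd ∪ ((p.vars.image Prod.snd) ×ˢ (p.vars.image Prod.snd)).image (fun nn : (ℤ × ℤ) × (ℤ × ℤ) => ((m2 + nn.1.1 + nn.2.1, n2 + nn.1.2 + nn.2.2) : ℤ × ℤ))) := Finset.subset_union_left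
  rw [eUp_expand q μ i m1 n1 (eUp l q μ j m2 n2 p) (p.vars.image Prod.snd ∪ ((p.vars.image Prod.snd) ×ˢ (p.vars.image Prod.snd)).image (fun nn : (ℤ × ℤ) × (ℤ × ℤ) => ((m2 + nn.1.1 + nn.2.1, n2 + nn.1.2 + nn.2.2) : ℤ × ℤ))) (vars_bound q μ j m2 n2 p)]
  rw [eUp_expand q μ j m2 n2 p (p.vars.image Prod.snd) hTmem]
  have hA : q ^ (-(m1 * n1)) • μ • pderiv ((i, -m1, -n1) : Idx l × ℤ × ℤ)
        ((q ^ (-(m2 * n2)) • μ • pderiv ((j, -m2, -n2) : Idx l × ℤ × ℤ) p) - (∑ h : Idx l, ∑ nn ∈ (p.vars.image Prod.snd) ×ˢ (p.vars.image Prod.snd), q ^ (n2 * nn.2.1 + nn.1.2 * m2 + nn.1.2 * nn.2.1) • (X (h, m2 + nn.1.1 + nn.2.1, n2 + nn.1.2 + nn.2.2) * pderiv (h, nn.1.1, nn.1.2) (pderiv (j, nn.2.1, nn.2.2) p)))) =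
      P1 q μ i j m1 n1 m2 n2 p - ((∑ h : Idx l, ∑ nn ∈ (p.vars.image Prod.snd) ×ˢ (p.vars.image Prod.snd), if ((i, -m1, -n1) : Idx l × ℤ × ℤ) = (h, m2 + nn.1.1 + nn.2.1, n2 + nn.1.2 + nn.2.2) then q ^ (-(m1 * n1)) • μ • (q ^ (n2 * nn.2.1 + nn.1.2 * m2 + nn.1.2 * nn.2.1) • pderiv (h, nn.1.1, nn.1.2) (pderiv (j, nn.2.1, nn.2.2) p)) else 0) + (∑ h : Idx l, ∑ nn ∈ (p.vars.image Prod.snd) ×ˢ (p.vars.image Prod.snd), q ^ (-(m1 * n1)) • μ • (q ^ (n2 * nn.2.1 + nn.1.2 * m2 + nn.1.2 * nn.2.1) • (X (h, m2 + nn.1.1 + nn.2.1, n2 + nn.1.2 + nn.2.2) * pderiv (i, -m1, -n1) (pderiv (h, nn.1.1, nn.1.2) (pderiv (j, nn.2.1, nn.2.2) p)))))) := by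
    simp only [map_sub, Derivation.map_smul, map_sum, pderiv_X_mul', smul_add, smul_sub,
      Finset.smul_sum, Finset.sum_add_distrib, smul_ite, smul_zero]
    rw [P1]
  have hB : (∑ k : Idx l, ∑ mm ∈ (p.vars.image Prod.snd ∪ ((p.vars.image Prod.snd) ×ˢ (p.vars.image Prod.snd)).image (fun nn : (ℤ × ℤ) × (ℤ × ℤ) => ((m2 + nn.1.1 + nn.2.1, n2 + nn.1.2 + nn.2.2) : ℤ × ℤ))) ×ˢ (p.vars.image Prod.snd ∪ ((p.vars.image Prod.snd) ×ˢ (p.vars.image Prod.snd)).image (fun nn : (ℤ × ℤ) × (ℤ × ℤ) => ((m2 + nn.1.1 + nn.2.1, n2 + nn.1.2 + nn.2.2) : ℤ × ℤ))),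
        q ^ (n1 * mm.2.1 + mm.1.2 * m1 + mm.1.2 * mm.2.1) • (X (k, m1 + mm.1.1 + mm.2.1, n1 + mm.1.2 + mm.2.2) * pderiv (k, mm.1.1, mm.1.2) (pderiv (i, mm.2.1, mm.2.2)
          ((q ^ (-(m2 * n2)) • μ • pderiv ((j, -m2, -n2) : Idx l × ℤ × ℤ) p) - (∑ h : Idx l, ∑ nn ∈ (p.vars.image Prod.snd) ×ˢ (p.vars.image Prod.snd), q ^ (n2 * nn.2.1 + nn.1.2 * m2 + nn.1.2 * nn.2.1) • (X (h, m2 + nn.1.1 + nn.2.1, n2 + nn.1.2 + nn.2.2) * pderiv (h, nn.1.1, nn.1.2) (pderiv (j, nn.2.1, nn.2.2) p))))))) =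
      (∑ k : Idx l, ∑ mm ∈ (p.vars.image Prod.snd ∪ ((p.vars.image Prod.snd) ×ˢ (p.vars.image Prod.snd)).image (fun nn : (ℤ × ℤ) × (ℤ × ℤ) => ((m2 + nn.1.1 + nn.2.1, n2 + nn.1.2 + nn.2.2) : ℤ × ℤ))) ×ˢ (p.vars.image Prod.snd ∪ ((p.vars.image Prod.snd) ×ˢ (p.vars.image Prod.snd)).image (fun nn : (ℤ × ℤ) × (ℤ × ℤ) => ((m2 + nn.1.1 + nn.2.1, n2 + nn.1.2 + nn.2.2) : ℤ × ℤ))), q ^ (n1 * mm.2.1 + mm.1.2 * m1 + mm.1.2 * mm.2.1) • (X (k, m1 + mm.1.1 + mm.2.1, n1 + mm.1.2 + mm.2.2) * (q ^ (-(m2 * n2)) • μ • pderiv (k, mm.1.1, mm.1.2) (pderiv (i, mm.2.1, mm.2.2) (pderiv ((j, -m2, -n2) : Idx l × ℤ × ℤ) p))))) - ((∑ k : Idx l, ∑ mm ∈ (p.vars.image Prod.snd ∪ ((p.vars.image Prod.snd) ×ˢ (p.vars.image Prod.snd)).image (fun nn : (ℤ × ℤ) × (ℤ × ℤ) => ((m2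 + nn.1.1 + nn.2.1, n2 + nn.1.2 + nn.2.2) : ℤ × ℤ))) ×ˢ (p.vars.image Prod.snd ∪ ((p.vars.image Prod.snd) ×ˢ (p.vars.image Prod.snd)).image (fun nn : (ℤ × ℤ) × (ℤ × ℤ) => ((m2 + nn.1.1 + nn.2.1, n2 + nn.1.2 + nn.2.2) : ℤ × ℤ))), ∑ h : Idx l, ∑ nn ∈ (p.vars.image Prod.snd) ×ˢ (p.vars.image Prod.snd), if ((i, mm.2.1, mm.2.2) : Idx l × ℤ × ℤ) = (h, m2 + nn.1.1 + nn.2.1, n2 + nn.1.2 + nn.2.2) then q ^ (n1 * mm.2.1 + mm.1.2 * m1 + mm.1.2 * mm.2.1) • (X (k, m1 + mm.1.1 + mm.2.1, n1 + mm.1.2 + mm.2.2) * (q ^ (n2 * nn.2.1 + nn.1.2 * m2 + nn.1.2 * nn.2.1) • pderiv (k, mm.1.1, mm.1.2) (pderiv (h, nn.1.1, nn.1.2) (pderiv (j, nn.2.1, nn.2.2) p)))) else 0) + (∑ k : Idx l, ∑ mm ∈ (p.vars.image Prod.snd ∪ ((p.vars.image Prod.snd) ×ˢ (p.vars.image Prod.snd)).image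 (fun nn : (ℤ × ℤ) × (ℤ × ℤ) => ((m2 + nn.1.1 + nn.2.1, n2 + nn.1.2 + nn.2.2) : ℤ × ℤ))) ×ˢ (p.vars.image Prod.snd ∪ ((p.vars.image Prod.snd) ×ˢ (p.vars.image Prod.snd)).image (fun nn : (ℤ × ℤ) × (ℤ × ℤ) => ((m2 + nn.1.1 + nn.2.1, n2 + nn.1.2 + nn.2.2) : ℤ × ℤ))), ∑ h : Idx l, ∑ nn ∈ (p.vars.image Prod.snd) ×ˢ (p.vars.image Prod.snd), if ((k, mm.1.1, mm.1.2) : Idx l × ℤ × ℤ) = (h, m2 + nn.1.1 + nn.2.1, n2 + nn.1.2 + nn.2.2) then q ^ (n1 * mm.2.1 + mm.1.2 * m1 + mm.1.2 * mm.2.1) • (X (k, m1 + mm.1.1 + mm.2.1, n1 + mm.1.2 + mm.2.2) * (q ^ (n2 * nn.2.1 + nn.1.2 * m2 + nn.1.2 * nn.2.1) • pderiv (i, mm.2.1, mm.2.2) (pderiv (h, nn.1.1, nn.1.2) (pderiv (j, nn.2.1, nn.2.2) p)))) else 0) + (∑ k : Idx l, ∑ mm ∈ (p.vars.image Prod.snd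 ∪ ((p.vars.image Prod.snd) ×ˢ (p.vars.image Prod.snd)).image (fun nn : (ℤ × ℤ) × (ℤ × ℤ) => ((m2 + nn.1.1 + nn.2.1, n2 + nn.1.2 + nn.2.2) : ℤ × ℤ))) ×ˢ (p.vars.image Prod.snd ∪ ((p.vars.image Prod.snd) ×ˢ (p.vars.image Prod.snd)).image (fun nn : (ℤ × ℤ) × (ℤ × ℤ) => ((m2 + nn.1.1 + nn.2.1, n2 + nn.1.2 + nn.2.2) : ℤ × ℤ))), ∑ h : Idx l, ∑ nn ∈ (p.vars.image Prod.snd) ×ˢ (p.vars.image Prod.snd), q ^ (n1 * mm.2.1 + mm.1.2 * m1 + mm.1.2 * mm.2.1) • (X (k, m1 + mm.1.1 + mm.2.1, n1 + mm.1.2 + mm.2.2) * (q ^ (n2 * nn.2.1 + nn.1.2 * m2 + nn.1.2 * nn.2.1) • (X (h, m2 + nn.1.1 + nn.2.1, n2 + nn.1.2 + nn.2.2) * pderiv (k, mm.1.1, mm.1.2) (pderiv (i, mm.2.1, mm.2.2) (pderiv (h, nn.1.1, nn.1.2) (pderiv (j, nn.2.1, nn.2.2) p)))))))) := by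
    simp only [map_sub, map_sum, Derivation.map_smul, Derivation.map_add, pderiv_X_mul',
      pderiv_ite, smul_ite, smul_zero, smul_sub, smul_add, mul_ite, mul_zero, mul_sub,
      mul_add, Finset.smul_sum, Finset.mul_sum, Finset.sum_add_distrib,
      Finset.sum_sub_distrib]
    abel
  have hT1c : (∑ h : Idx l, ∑ nn ∈ (p.vars.image Prod.snd) ×ˢ (p.vars.image Prod.snd), if ((i, -m1, -n1) : Idx l × ℤ × ℤ) = (h, m2 + nn.1.1 + nn.2.1, n2 + nn.1.2 + nn.2.2) then q ^ (-(m1 * n1)) • μ • (q ^ (n2 * nn.2.1 + nn.1.2 * m2 + nn.1.2 * nn.2.1) • pderiv (h, nn.1.1, nn.1.2) (pderiv (j, nn.2.1, nn.2.2) p)) else 0) = ∑ gh ∈ p.vars.image Prod.snd, q ^ (-(m1 * n1)) • μ • (q ^ (n2 * gh.1 + (-n1 - n2 - gh.2) * m2 + (-n1 - n2 - gh.2) * gh.1) • pderiv (i, -m1 - m2 - gh.1, -n1 - n2 - gh.2) (pderiv (j, gh.1, gh.2) p)) := by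
    refine Eq.trans (pair_collapse i ((-m1, -n1) : ℤ × ℤ) ((p.vars.image Prod.snd) ×ˢ (p.vars.image Prod.snd))
        (fun nn => ((m2 + nn.1.1 + nn.2.1, n2 + nn.1.2 + nn.2.2) : ℤ × ℤ))
        (fun h nn => q ^ (-(m1 * n1)) • μ •
          (q ^ (n2 * nn.2.1 + nn.1.2 * m2 + nn.1.2 * nn.2.1) • pderiv (h, nn.1.1, nn.1.2) (pderiv (j, nn.2.1, nn.2.2) p)))) ?_
    have hcond : ∀ nn : (ℤ × ℤ) × (ℤ × ℤ),
        (((-m1, -n1) : ℤ × ℤ) = ((m2 + nn.1.1 + nn.2.1, n2 + nn.1.2 + nn.2.2) : ℤ × ℤ)) =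
          (nn.1 = ((-m1 - m2 - nn.2.1, -n1 - n2 - nn.2.2) : ℤ × ℤ)) := by
      intro nn
      apply propext
      rw [Prod.ext_iff, Prod.ext_iff]
      constructor
      · rintro ⟨h1, h2⟩; constructor <;> [omega; omega]
      · rintro ⟨h1, h2⟩; constructor <;> [omega; omega]
    simp only [hcond]
    refine Eq.trans (prod_collapse (p.vars.image Prod.snd) (p.vars.image Prod.snd)
        (fun gh => ((-m1 - m2 - gh.1, -n1 - n2 - gh.2) : ℤ × ℤ))
        (fun ef gh => q ^ (-(m1 * n1)) • μ •
          (q ^ (n2 * gh.1 + ef.2 * m2 + ef.2 * gh.1) •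
            pderiv (i, ef.1, ef.2) (pderiv (j, gh.1, gh.2) p))) ?_) ?_
    · intro gh hgh hne
      have h2 : pderiv ((i, -m1 - m2 - gh.1, -n1 - n2 - gh.2) : Idx l × ℤ × ℤ)
          (pderiv (j, gh.1, gh.2) p) ≠ 0 := by
        intro h0; apply hne; simp [h0]
      have := mem_snd_of_pd_ne_zero h2
        (fun x hx => Finset.mem_image_of_mem _ (mem_vars_pderiv hx))
      simpa using this
    · rfl
  have hU1c : (∑ k : Idx l, ∑ mm ∈ (p.vars.image Prod.snd ∪ ((p.vars.image Prod.snd) ×ˢ (p.vars.image Prod.snd)).image (fun nn : (ℤ × ℤ) × (ℤ × ℤ) => ((m2 + nn.1.1 + nn.2.1, n2 + nn.1.2 + nn.2.2) : ℤ × ℤ))) ×ˢ (p.vars.image Prod.snd ∪ ((p.vars.image Prod.snd) ×ˢ (p.vars.image Prod.snd)).image (fun nn : (ℤ × ℤ) × (ℤ × ℤ) => ((m2 + nn.1.1 + nn.2.1, n2 + nn.1.2 + nn.2.2) : ℤ × ℤ))), ∑ h : Idx l, ∑ nn ∈ (p.vars.image Prod.snd) ×ˢ (p.vars.image Prod.snd),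 if ((i, mm.2.1, mm.2.2) : Idx l × ℤ × ℤ) = (h, m2 + nn.1.1 + nn.2.1, n2 + nn.1.2 + nn.2.2) then q ^ (n1 * mm.2.1 + mm.1.2 * m1 + mm.1.2 * mm.2.1) • (X (k, m1 + mm.1.1 + mm.2.1, n1 + mm.1.2 + mm.2.2) * (q ^ (n2 * nn.2.1 + nn.1.2 * m2 + nn.1.2 * nn.2.1) • pderiv (k, mm.1.1, mm.1.2) (pderiv (h, nn.1.1, nn.1.2) (pderiv (j, nn.2.1, nn.2.2) p)))) else 0) = ∑ k : Idx l, ∑ ab ∈ (p.vars.image Prod.snd ∪ ((p.vars.image Prod.snd) ×ˢ (p.vars.image Prod.snd)).image (fun nn : (ℤ × ℤ) × (ℤ × ℤ) => ((m2 + nn.1.1 + nn.2.1, n2 + nn.1.2 + nn.2.2) : ℤ × ℤ))), ∑ nn ∈ (p.vars.image Prod.snd) ×ˢ (p.vars.image Prod.snd), q ^ (n1 * (m2 + nn.1.1 + nn.2.1) + ab.2 * m1 + ab.2 * (m2 + nn.1.1 + nn.2.1)) • (X (k, m1 + ab.1 + (m2 + nn.1.1 + nn.2.1), n1 + ab.2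 + (n2 + nn.1.2 + nn.2.2)) * (q ^ (n2 * nn.2.1 + nn.1.2 * m2 + nn.1.2 * nn.2.1) • pderiv (k, ab.1, ab.2) (pderiv (i, nn.1.1, nn.1.2) (pderiv (j, nn.2.1, nn.2.2) p)))) := by
    refine Finset.sum_congr rfl fun k _ => ?_
    rw [Finset.sum_product]
    refine Finset.sum_congr rfl fun ab _ => ?_
    refine Eq.trans (quad_collapse i ((p.vars.image Prod.snd ∪ ((p.vars.image Prod.snd) ×ˢ (p.vars.image Prod.snd)).image (fun nn : (ℤ × ℤ) × (ℤ × ℤ) => ((m2 + nn.1.1 + nn.2.1, n2 + nn.1.2 + nn.2.2) : ℤ × ℤ)))) ((p.vars.image Prod.snd) ×ˢ (p.vars.image Prod.snd))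
        (fun nn => ((m2 + nn.1.1 + nn.2.1, n2 + nn.1.2 + nn.2.2) : ℤ × ℤ))
        (fun cd h nn => q ^ (n1 * cd.1 + ab.2 * m1 + ab.2 * cd.1) •
          (X (k, m1 + ab.1 + cd.1, n1 + ab.2 + cd.2) *
            (q ^ (n2 * nn.2.1 + nn.1.2 * m2 + nn.1.2 * nn.2.1) • pderiv (k, ab.1, ab.2)
              (pderiv (h, nn.1.1, nn.1.2) (pderiv (j, nn.2.1, nn.2.2) p))))) ?_) ?_
    · intro nn hnn _
      exact Finset.mem_union_right _ (Finset.mem_image_of_mem _ hnn)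
    · rfl
  have hU2c : (∑ k : Idx l, ∑ mm ∈ (p.vars.image Prod.snd ∪ ((p.vars.image Prod.snd) ×ˢ (p.vars.image Prod.snd)).image (fun nn : (ℤ × ℤ) × (ℤ × ℤ) => ((m2 + nn.1.1 + nn.2.1, n2 + nn.1.2 + nn.2.2) : ℤ × ℤ))) ×ˢ (p.vars.image Prod.snd ∪ ((p.vars.image Prod.snd) ×ˢ (p.vars.image Prod.snd)).image (fun nn : (ℤ × ℤ) × (ℤ × ℤ) => ((m2 + nn.1.1 + nn.2.1, n2 + nn.1.2 + nn.2.2) : ℤ × ℤ))), ∑ h : Idx l, ∑ nn ∈ (p.vars.image Prod.snd) ×ˢ (p.vars.image Prod.snd), if ((k, mm.1.1, mm.1.2) : Idx l × ℤ × ℤ) = (h, m2 + nn.1.1 + nn.2.1, n2 + nn.1.2 + nn.2.2) then q ^ (n1 * mm.2.1 + mm.1.2 * m1 + mm.1.2 * mm.2.1) • (X (k, m1 + mm.1.1 + mm.2.1, n1 + mm.1.2 + mm.2.2) * (q ^ (n2 * nn.2.1 + nn.1.2 * m2 + nn.1.2 * nn.2.1) • pderiv (i, mm.2.1, mm.2.2)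 (pderiv (h, nn.1.1, nn.1.2) (pderiv (j, nn.2.1, nn.2.2) p)))) else 0) = ∑ k : Idx l, ∑ cd ∈ (p.vars.image Prod.snd ∪ ((p.vars.image Prod.snd) ×ˢ (p.vars.image Prod.snd)).image (fun nn : (ℤ × ℤ) × (ℤ × ℤ) => ((m2 + nn.1.1 + nn.2.1, n2 + nn.1.2 + nn.2.2) : ℤ × ℤ))), ∑ nn ∈ (p.vars.image Prod.snd) ×ˢ (p.vars.image Prod.snd), q ^ (n1 * cd.1 + (n2 + nn.1.2 + nn.2.2) * m1 + (n2 + nn.1.2 + nn.2.2) * cd.1) • (X (k, m1 + (m2 + nn.1.1 + nn.2.1) + cd.1, n1 + (n2 + nn.1.2 + nn.2.2) + cd.2) * (q ^ (n2 * nn.2.1 + nn.1.2 * m2 + nn.1.2 * nn.2.1) • pderiv (i, cd.1, cd.2) (pderiv (k, nn.1.1, nn.1.2) (pderiv (j, nn.2.1, nn.2.2) p)))) := by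
    refine Finset.sum_congr rfl fun k _ => ?_
    rw [Finset.sum_product]
    rw [Finset.sum_comm]
    refine Finset.sum_congr rfl fun cd _ => ?_
    refine Eq.trans (quad_collapse k ((p.vars.image Prod.snd ∪ ((p.vars.image Prod.snd) ×ˢ (p.vars.image Prod.snd)).image (fun nn : (ℤ × ℤ) × (ℤ × ℤ) => ((m2 + nn.1.1 + nn.2.1, n2 + nn.1.2 + nn.2.2) : ℤ × ℤ)))) ((p.vars.image Prod.snd) ×ˢ (p.vars.image Prod.snd))
        (fun nn => ((m2 + nn.1.1 + nn.2.1, n2 + nn.1.2 + nn.2.2) : ℤ × ℤ))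
        (fun ab h nn => q ^ (n1 * cd.1 + ab.2 * m1 + ab.2 * cd.1) •
          (X (k, m1 + ab.1 + cd.1, n1 + ab.2 + cd.2) *
            (q ^ (n2 * nn.2.1 + nn.1.2 * m2 + nn.1.2 * nn.2.1) • pderiv (i, cd.1, cd.2)
              (pderiv (h, nn.1.1, nn.1.2) (pderiv (j, nn.2.1, nn.2.2) p))))) ?_) ?_
    · intro nn hnn _
      exact Finset.mem_union_right _ (Finset.mem_image_of_mem _ hnn)
    · rfl
  rw [hA, hB, hT1c, hU1c, hU2c]
  unfold E
  rw [T1_conv q μ i j m1 n1 m2 n2 p, T2_conv q μ i j m1 n1 m2 n2 p,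
    T3_conv q μ i j m1 n1 m2 n2 p _ hTA, U1_conv q μ i j m1 n1 m2 n2 p _ hTA,
    U2_conv q μ i j m1 n1 m2 n2 p _ hTA, QQ_conv q μ i j m1 n1 m2 n2 p _ hTA]
  abel

end Expand

end Stmt8Aux

theorem stmt8 (l : ℕ) (hl : 3 ≤ l) (q μ : ℂ) (hq : q ≠ 0)
    (i j : Idx l) (hij : i ≠ j) (m1 n1 m2 n2 : ℤ) :
    oComm (eUp l q μ i m1 n1) (eUp l q μ j m2 n2) = fun _ => 0 := by
  funext p
  show eUp l q μ i m1 n1 (eUp l q μ j m2 n2 p) - eUp l q μ j m2 n2 (eUp l q μ i m1 n1 p) = 0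
  rw [Stmt8Aux.expand q μ i j m1 n1 m2 n2 p, Stmt8Aux.expand q μ j i m2 n2 m1 n1 p,
    Stmt8Aux.E_symm q μ i j m1 n1 m2 n2 p hq]
  exact sub_self _
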